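/- Let F, F₀, μ, H be as in the linear map method and suppose F₀ − F is an odd function of ξ = θ − μ (i.e., F₀(μ+ξ) − F(μ+ξ) = −(F₀(μ−ξ) − F(μ−ξ))). Then the symmetrized weight wˢ(ξ) = (e^{F₀(μ+ξ)−F(μ+ξ)} + e^{F₀(μ−ξ)−F(μ−ξ)})/2 = cosh(F₀(μ+ξ) − F(μ+ξ)) satisfies wˢ ≥ 1 and wˢ(ξ) − 1 = O((F₀ − F)²), whereas the non-symmetrized weight deviates from 1 at first order in F₀ − F. -/

import Mathlib

open Matrix

/-- `sinh y ≤ y * cosh y` for `y ≥ 0`. -/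
lemma aux_sinh_le (y : ℝ) (hy : 0 ≤ y) : Real.sinh y ≤ y * Real.cosh y := by
  have hmono : MonotoneOn (fun t : ℝ => t * Real.cosh t - Real.sinh t) (Set.Ici 0) := by
    have hderiv : ∀ t : ℝ, HasDerivAt (fun t : ℝ => t * Real.cosh t - Real.sinh t)
        (t * Real.sinh t) t := by
      intro t
      have h1 : HasDerivAt (fun t : ℝ => t * Real.cosh t)
          (1 * Real.cosh t + t * Real.sinh t) t :=
        (hasDerivAt_id t).mul (Real.hasDerivAt_cosh t)
      have h2 := h1.sub (Real.hasDerivAt_sinh t)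
      exact h2.congr_deriv (by ring)
    apply monotoneOn_of_deriv_nonneg (convex_Ici 0)
    · exact (Continuous.continuousOn (by continuity))
    · intro t _
      exact (hderiv t).differentiableAt.differentiableWithinAt
    · intro t ht
      rw [interior_Ici] at ht
      rw [(hderiv t).deriv]
      exact mul_nonneg (le_of_lt ht) (Real.sinh_nonneg_iff.mpr (le_of_lt ht))
  have h0 : (0:ℝ) ∈ Set.Ici (0:ℝ) := Set.self_mem_Ici
  have := hmono h0 hy hy
  simp only [Real.sinh_zero, Real.cosh_zero, mul_one, zero_mul, sub_zero, zero_sub, neg_zero]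
    at this
  linarith

/-- `cosh x - 1 ≤ x^2/2 * cosh x`. -/
lemma aux_cosh_bound (x : ℝ) : Real.cosh x - 1 ≤ x ^ 2 / 2 * Real.cosh x := by
  have h2 : Real.cosh x = 2 * Real.sinh (x/2) ^ 2 + 1 := by
    have := Real.cosh_two_mul (x/2)
    have hs := Real.cosh_sq (x/2)
    have : Real.cosh (2 * (x/2)) = 2 * Real.sinh (x/2) ^ 2 + 1 := by
      rw [this, hs]; ring
    rwa [mul_div_cancel₀ _ (two_ne_zero)] at this
  have h3 : Real.cosh x = 2 * Real.cosh (x/2) ^ 2 - 1 := by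
    have := Real.cosh_two_mul (x/2)
    have hs := Real.cosh_sq (x/2)
    have : Real.cosh (2 * (x/2)) = 2 * Real.cosh (x/2) ^ 2 - 1 := by
      rw [this, hs]; ring
    rwa [mul_div_cancel₀ _ (two_ne_zero)] at this
  -- sinh(x/2)^2 ≤ (x/2)^2 * cosh(x/2)^2
  have hsq : Real.sinh (x/2) ^ 2 ≤ (x/2) ^ 2 * Real.cosh (x/2) ^ 2 := by
    have h := aux_sinh_le |x/2| (abs_nonneg _)
    have hnn : 0 ≤ Real.sinh |x/2| := Real.sinh_nonneg_iff.mpr (abs_nonneg _)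
    have hsqle : Real.sinh |x/2| ^ 2 ≤ (|x/2| * Real.cosh |x/2|) ^ 2 := by
      exact pow_le_pow_left₀ hnn h 2
    have e1 : Real.sinh |x/2| ^ 2 = Real.sinh (x/2) ^ 2 := by
      rcases abs_choice (x/2) with h | h <;> rw [h] <;> simp [Real.sinh_neg]
    have e2 : Real.cosh |x/2| = Real.cosh (x/2) := by
      rcases abs_choice (x/2) with h | h <;> rw [h] <;> simp [Real.cosh_neg]
    calc Real.sinh (x/2) ^ 2 = Real.sinh |x/2| ^ 2 := e1.symm
      _ ≤ (|x/2| * Real.cosh |x/2|) ^ 2 := hsqle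
      _ = (x/2) ^ 2 * Real.cosh (x/2) ^ 2 := by rw [mul_pow, sq_abs, e2]
  have hcsq : Real.cosh (x/2) ^ 2 ≤ Real.cosh x := by
    have h1 : (1:ℝ) ≤ Real.cosh (x/2) := Real.one_le_cosh _
    nlinarith [h1]
  have hxnn : (0:ℝ) ≤ (x/2)^2 := sq_nonneg _
  calc Real.cosh x - 1 = 2 * Real.sinh (x/2) ^ 2 := by rw [h2]; ring
    _ ≤ 2 * ((x/2) ^ 2 * Real.cosh (x/2) ^ 2) := by linarith
    _ ≤ 2 * ((x/2) ^ 2 * Real.cosh x) := by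
        have := mul_le_mul_of_nonneg_left hcsq hxnn
        linarith
    _ = x ^ 2 / 2 * Real.cosh x := by ring

/-- `e^x - 1 ≤ x e^x` for all real `x`. -/
lemma aux_exp_sub_one (x : ℝ) : Real.exp x - 1 ≤ x * Real.exp x := by
  have h := Real.add_one_le_exp (-x)
  have hpos : (0:ℝ) < Real.exp x := Real.exp_pos x
  have := mul_le_mul_of_nonneg_left h (le_of_lt hpos)
  rw [← Real.exp_add] at this
  simp at this
  nlinarith

/-- For `x ≥ 0`, `e^x - 1 - x ≤ x^2/2 * e^x`. -/
lemma aux_exp_bound_pos (x : ℝ) (hx : 0 ≤ x) :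
    Real.exp x - 1 - x ≤ x ^ 2 / 2 * Real.exp x := by
  have hmono : MonotoneOn
      (fun t : ℝ => t ^ 2 / 2 * Real.exp t - Real.exp t + 1 + t) (Set.Ici 0) := by
    have hderiv : ∀ t : ℝ, HasDerivAt
        (fun t : ℝ => t ^ 2 / 2 * Real.exp t - Real.exp t + 1 + t)
        (t * Real.exp t + t ^ 2 / 2 * Real.exp t - Real.exp t + 1) t := by
      intro t
      have h1 : HasDerivAt (fun t : ℝ => t ^ 2 / 2) t t := by
        have := (hasDerivAt_pow 2 t).div_const 2
        exact this.congr_deriv (by ring)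
      have h2 := (h1.mul (Real.hasDerivAt_exp t)).sub (Real.hasDerivAt_exp t)
      have h3 := (h2.add_const 1).add (hasDerivAt_id t)
      exact h3.congr_deriv (by ring)
    apply monotoneOn_of_deriv_nonneg (convex_Ici 0)
    · exact Continuous.continuousOn (by continuity)
    · intro t _
      exact (hderiv t).differentiableAt.differentiableWithinAt
    · intro t ht
      rw [interior_Ici] at ht
      rw [(hderiv t).deriv]
      have h1 : Real.exp t - 1 ≤ t * Real.exp t := aux_exp_sub_one t
      have h2 : 0 ≤ t ^ 2 / 2 * Real.exp t :=
        mul_nonneg (by positivity) (le_of_lt (Real.exp_pos t))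
      linarith
  have h0 : (0:ℝ) ∈ Set.Ici (0:ℝ) := Set.self_mem_Ici
  have := hmono h0 hx hx
  simp only [Real.exp_zero] at this
  nlinarith

/-- For `x ≤ 0`, `e^x - 1 - x ≤ x^2/2`. -/
lemma aux_exp_bound_neg (x : ℝ) (hx : x ≤ 0) :
    Real.exp x - 1 - x ≤ x ^ 2 / 2 := by
  have hanti : AntitoneOn
      (fun t : ℝ => t ^ 2 / 2 - Real.exp t + 1 + t) (Set.Iic 0) := by
    have hderiv : ∀ t : ℝ, HasDerivAt
        (fun t : ℝ => t ^ 2 / 2 - Real.exp t + 1 + t)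
        (t - Real.exp t + 1) t := by
      intro t
      have h1 : HasDerivAt (fun t : ℝ => t ^ 2 / 2) t t := by
        have := (hasDerivAt_pow 2 t).div_const 2
        exact this.congr_deriv (by ring)
      have h2 := ((h1.sub (Real.hasDerivAt_exp t)).add_const 1).add (hasDerivAt_id t)
      exact h2.congr_deriv (by ring)
    apply antitoneOn_of_deriv_nonpos (convex_Iic 0)
    · exact Continuous.continuousOn (by continuity)
    · intro t _
      exact (hderiv t).differentiableAt.differentiableWithinAt
    · intro t _
      rw [(hderiv t).deriv]
      have := Real.add_one_le_exp t
      linarith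
  have h0 : (0:ℝ) ∈ Set.Iic (0:ℝ) := Set.self_mem_Iic
  have := hanti hx h0 hx
  simp only [Real.exp_zero] at this
  nlinarith

/-- `|e^x - 1 - x| ≤ x^2/2 * e^|x|`. -/
lemma aux_exp_taylor (x : ℝ) : |Real.exp x - 1 - x| ≤ x ^ 2 / 2 * Real.exp |x| := by
  have hlb : 0 ≤ Real.exp x - 1 - x := by
    have := Real.add_one_le_exp x; linarith
  rw [abs_of_nonneg hlb]
  rcases le_or_gt 0 x with hx | hx
  · rw [abs_of_nonneg hx]
    exact aux_exp_bound_pos x hx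
  · rw [abs_of_neg hx]
    have h1 := aux_exp_bound_neg x (le_of_lt hx)
    have h2 : (1:ℝ) ≤ Real.exp (-x) := by
      have := Real.add_one_le_exp (-x); linarith [Real.exp_pos (-x), Real.add_one_le_exp (-x)]
    nlinarith [sq_nonneg x]

/-- Second-order accuracy of the symmetrized weight: if the perturbation
`δ(ξ) = F₀(μ+ξ) - F(μ+ξ)` is odd in `ξ`, then the symmetrized weight
`wˢ(ξ) = (w(μ+ξ) + w(μ-ξ))/2` equals `cosh δ(ξ)`, is at least `1`, and deviates from `1`
only at second order in `δ`, while the plain weight `w(μ+ξ) = e^{δ(ξ)}` deviates from `1`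
at first order (with second-order error bound). -/
theorem symmetrized_weight_cosh
    {m : ℕ} (F F₀ : (Fin m → ℝ) → ℝ)
    (μv : Fin m → ℝ) (φ : ℝ)
    (H : Matrix (Fin m) (Fin m) ℝ) (hH : H.PosDef)
    (hφ : ∀ θ, φ ≤ F θ) (hφμ : F μv = φ)
    (hF₀ : ∀ θ, F₀ θ = φ + (1/2) * ((θ - μv) ⬝ᵥ H *ᵥ (θ - μv)))
    (w : (Fin m → ℝ) → ℝ) (hw : ∀ x, w x = Real.exp (F₀ x - F x))
    (δ : (Fin m → ℝ) → ℝ) (hδ : ∀ ξ, δ ξ = F₀ (μv + ξ) - F (μv + ξ))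
    (hodd : ∀ ξ, F₀ (μv + ξ) - F (μv + ξ) = -(F₀ (μv - ξ) - F (μv - ξ)))
    (ws : (Fin m → ℝ) → ℝ) (hws : ∀ ξ, ws ξ = (w (μv + ξ) + w (μv - ξ)) / 2) :
    ∀ ξ : Fin m → ℝ,
      ws ξ = Real.cosh (δ ξ) ∧
      1 ≤ ws ξ ∧
      ws ξ - 1 ≤ (δ ξ) ^ 2 / 2 * Real.cosh (δ ξ) ∧
      |w (μv + ξ) - 1 - δ ξ| ≤ (δ ξ) ^ 2 / 2 * Real.exp |δ ξ| := by
  intro ξ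
  have hwplus : w (μv + ξ) = Real.exp (δ ξ) := by rw [hw, hδ]
  have hwminus : w (μv - ξ) = Real.exp (-(δ ξ)) := by
    rw [hw, hδ]
    congr 1
    have := hodd ξ
    linarith
  have hcosh : ws ξ = Real.cosh (δ ξ) := by
    rw [hws, hwplus, hwminus, Real.cosh_eq]
  refine ⟨hcosh, ?_, ?_, ?_⟩
  · rw [hcosh]; exact Real.one_le_cosh _
  · rw [hcosh]; exact aux_cosh_bound (δ ξ)
  · rw [hwplus]; exact aux_exp_taylor (δ ξ)
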